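/- In the matrix algebra M_{n+1}(ℂ) with rows and columns indexed by {0,1,…,n}, let Eᵢⱼ denote the matrix units, and set a⁺ᵢ := Eᵢ₀ and a⁻ᵢ := E₀ᵢ for 1 ≤ i ≤ n. Then these elements satisfy the orthofermion relations of order n: a⁻ᵢa⁻ⱼ = 0 and a⁺ᵢa⁺ⱼ = 0 for all i, j, and a⁻ᵢa⁺ⱼ + δᵢⱼ Σₖ a⁺ₖa⁻ₖ = δᵢⱼ·1. Moreover the unital subalgebra of M_{n+1}(ℂ) generated by {a⁻ᵢ, a⁺ᵢ : 1 ≤ i ≤ n} is all of M_{n+1}(ℂ). -/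

import Mathlib

open Matrix

theorem stmt_7 (n : ℕ) :
    let ap : Fin n → Matrix (Fin (n + 1)) (Fin (n + 1)) ℂ :=
      fun i => Matrix.single i.succ 0 1
    let am : Fin n → Matrix (Fin (n + 1)) (Fin (n + 1)) ℂ :=
      fun i => Matrix.single 0 i.succ 1
    (∀ i j, am i * am j = 0) ∧
    (∀ i j, ap i * ap j = 0) ∧
    (∀ i j, am i * ap j + (if i = j then ∑ k, ap k * am k else 0) =
      (if i = j then 1 else 0)) ∧
    Algebra.adjoin ℂ (Set.range am ∪ Set.range ap) = ⊤ := by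
  intro ap am
  have hsucc : ∀ i : Fin n, i.succ ≠ (0 : Fin (n+1)) := fun i => Fin.succ_ne_zero i
  have hone : (1 : Matrix (Fin (n+1)) (Fin (n+1)) ℂ) =
      ∑ i : Fin (n+1), single i i (1 : ℂ) := by
    conv_lhs => rw [matrix_eq_sum_single (1 : Matrix (Fin (n+1)) (Fin (n+1)) ℂ)]
    refine Finset.sum_congr rfl fun i _ => ?_
    rw [Finset.sum_eq_single i]
    · simp [Matrix.one_apply]
    · intro b _ hb; simp [Matrix.one_apply, Ne.symm hb]
    · simp
  have hsum : (∑ k, ap k * am k) = ∑ k : Fin n, single k.succ k.succ (1 : ℂ) := by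
    refine Finset.sum_congr rfl fun k _ => ?_
    show single k.succ (0 : Fin (n+1)) (1:ℂ) * single (0 : Fin (n+1)) k.succ 1 = _
    rw [Matrix.single_mul_single_same, one_mul]
  refine ⟨?_, ?_, ?_, ?_⟩
  · intro i j
    exact Matrix.single_mul_single_of_ne 1 (0 : Fin (n+1)) i.succ _ (hsucc i) 1
  · intro i j
    exact Matrix.single_mul_single_of_ne 1 i.succ (0 : Fin (n+1)) _
      (fun h => hsucc j h.symm) 1
  · intro i j
    by_cases h : i = j
    · subst h
      simp only [if_pos rfl, hsum]
      have hm : am i * ap i = single (0 : Fin (n+1)) 0 (1 : ℂ) := by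
        show single (0 : Fin (n+1)) i.succ (1:ℂ) * single i.succ (0 : Fin (n+1)) 1 = _
        rw [Matrix.single_mul_single_same, one_mul]
      rw [hm, hone, Fin.sum_univ_succ]
      simp
    · have hm : am i * ap j = 0 :=
        Matrix.single_mul_single_of_ne 1 (0 : Fin (n+1)) i.succ _
          (fun h' => h (Fin.succ_injective n h')) 1
      simp [h, hm]
  · rw [eq_top_iff]
    intro x _
    have ham : ∀ i : Fin n, single (0 : Fin (n+1)) i.succ (1:ℂ) ∈
        Algebra.adjoin ℂ (Set.range am ∪ Set.range ap) :=
      fun i => Algebra.subset_adjoin (Or.inl ⟨i, rfl⟩)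
    have hap : ∀ i : Fin n, single i.succ (0 : Fin (n+1)) (1:ℂ) ∈
        Algebra.adjoin ℂ (Set.range am ∪ Set.range ap) :=
      fun i => Algebra.subset_adjoin (Or.inr ⟨i, rfl⟩)
    have hps : ∀ i j : Fin n, single i.succ j.succ (1:ℂ) ∈
        Algebra.adjoin ℂ (Set.range am ∪ Set.range ap) := by
      intro i j
      have heq : single i.succ (0 : Fin (n+1)) (1:ℂ) *
          single (0 : Fin (n+1)) j.succ (1:ℂ) = single i.succ j.succ (1:ℂ) := by
        rw [Matrix.single_mul_single_same, one_mul]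
      exact heq ▸ Subalgebra.mul_mem _ (hap i) (ham j)
    have h00 : single (0 : Fin (n+1)) (0 : Fin (n+1)) (1:ℂ) ∈
        Algebra.adjoin ℂ (Set.range am ∪ Set.range ap) := by
      have heq : single (0 : Fin (n+1)) (0 : Fin (n+1)) (1:ℂ) =
          1 - ∑ k : Fin n, single k.succ k.succ (1:ℂ) := by
        rw [hone, Fin.sum_univ_succ, add_sub_cancel_right]
      rw [heq]
      exact Subalgebra.sub_mem _ (Subalgebra.one_mem _)
        (Subalgebra.sum_mem _ fun k _ => hps k k)
    have hE : ∀ (i j : Fin (n+1)), single i j (1 : ℂ) ∈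
        Algebra.adjoin ℂ (Set.range am ∪ Set.range ap) := by
      intro i j
      refine Fin.cases ?_ ?_ i <;> [skip; intro i'] <;> refine Fin.cases ?_ ?_ j
      · exact h00
      · intro j'; exact ham j'
      · exact hap i'
      · intro j'; exact hps i' j'
    rw [matrix_eq_sum_single x]
    refine Subalgebra.sum_mem _ fun i _ => Subalgebra.sum_mem _ fun j _ => ?_
    have hx : single i j (x i j) = (x i j) • single i j (1:ℂ) := by
      rw [Matrix.smul_single, smul_eq_mul, mul_one]
    rw [hx]
    exact Subalgebra.smul_mem _ (hE i j) _
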